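/- Each of the three functions I_{−1}^m, I_0^m, I_1^m converges, uniformly in x ∈ ℝ as m → ∞, to the function x ↦ (1/3) ∫_{η1}^{η2} W(x − y) dy. -/

import Mathlib

open MeasureTheory Filter


-- uniform continuity of a continuous periodic function
lemma periodic_uniformContinuous {T : ℝ} (hT : 0 < T) {W : ℝ → ℝ}
    (hWc : Continuous W) (hWp : Function.Periodic W T) : UniformContinuous W := by
  rw [Metric.uniformContinuous_iff]
  intro ε hε
  obtain ⟨δ, hδ, hδ'⟩ := Metric.uniformContinuousOn_iff.mp
    ((isCompact_Icc (a := (-1 : ℝ)) (b := T + 1)).uniformContinuousOn_of_continuous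
      hWc.continuousOn) ε hε
  refine ⟨min δ 1, lt_min hδ one_pos, ?_⟩
  intro a b hab
  set n : ℤ := ⌊a / T⌋ with hn
  have ha0 : 0 ≤ a - n * T := Int.sub_floor_div_mul_nonneg a hT
  have ha1 : a - n * T < T := Int.sub_floor_div_mul_lt a hT
  have hWa : W (a - n * T) = W a := by
    simpa using hWp.sub_int_mul_eq (x := a) (n := n)
  have hWb : W (b - n * T) = W b := by
    simpa using hWp.sub_int_mul_eq (x := b) (n := n)
  rw [← hWa, ← hWb]
  have hd : dist (a - n * T) (b - n * T) = dist a b := by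
    simp [Real.dist_eq]
  have hab1 : dist a b < 1 := lt_of_lt_of_le hab (min_le_right _ _)
  have habδ : dist a b < δ := lt_of_lt_of_le hab (min_le_left _ _)
  have hmem1 : a - n * T ∈ Set.Icc (-1 : ℝ) (T + 1) := ⟨by linarith, by linarith⟩
  have hmem2 : b - n * T ∈ Set.Icc (-1 : ℝ) (T + 1) := by
    have := abs_sub_lt_iff.mp (by rw [← Real.dist_eq]; exact hab1 : |a - b| < 1)
    constructor <;> [linarith [this.1, this.2]; linarith [this.1, this.2]]
  exact hδ' _ hmem1 _ hmem2 (by rwa [hd])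


lemma sum_range_three_mul (g : ℕ → ℝ) (m : ℕ) :
    ∑ i ∈ Finset.range (3 * m), g i
      = ∑ j ∈ Finset.range m, ∑ k ∈ Finset.range 3, g (3 * j + k) := by
  induction m with
  | zero => simp
  | succ n ih =>
    rw [Finset.sum_range_succ, ← ih, show 3 * (n + 1) = (3 * n + 1 + 1) + 1 by ring,
      Finset.sum_range_succ, Finset.sum_range_succ, Finset.sum_range_succ]
    simp [Finset.sum_range_succ]
    ring

lemma key_strip (W : ℝ → ℝ) (hWc : Continuous W) (hWuc : UniformContinuous W)
    (η1 η2 : ℝ) (hη : η1 < η2) (s : ℕ) (hs : s < 3) :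
    TendstoUniformly
      (fun (m : ℕ) (x : ℝ) => ∑ j ∈ Finset.range m,
        ∫ y in (η1 + ((3 * j + s : ℕ) : ℝ) * (η2 - η1) / (3 * (m : ℝ)))..(
                η1 + ((3 * j + s + 1 : ℕ) : ℝ) * (η2 - η1) / (3 * (m : ℝ))), W (x - y))
      (fun x => (1 / 3) * ∫ y in η1..η2, W (x - y)) atTop := by
  rw [Metric.tendstoUniformly_iff]
  intro ε hε
  set c : ℝ := η2 - η1 with hcdef
  have hc : 0 < c := by simp [hcdef]; linarith
  set ε' : ℝ := ε / c with hε'def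
  have hε' : 0 < ε' := div_pos hε hc
  obtain ⟨δ, hδ, hδ'⟩ := Metric.uniformContinuous_iff.mp hWuc ε' hε'
  obtain ⟨N, hN⟩ := exists_nat_gt (c / δ)
  filter_upwards [eventually_ge_atTop (max N 1)] with m hm
  have hm1 : 1 ≤ m := le_trans (le_max_right _ _) hm
  have hmN : (N : ℝ) ≤ (m : ℝ) := by exact_mod_cast le_trans (le_max_left _ _) hm
  have hmR : (0 : ℝ) < (m : ℝ) := by exact_mod_cast hm1
  intro x
  set d : ℝ := c / (3 * (m : ℝ)) with hddef
  have hd0 : 0 < d := div_pos hc (by positivity)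
  set f : ℕ → ℝ := fun i => η1 + (i : ℝ) * d with hfdef
  have hint : ∀ a b : ℝ, IntervalIntegrable (fun y => W (x - y)) volume a b := by
    intro a b
    exact (hWc.comp (continuous_const.sub continuous_id)).intervalIntegrable a b
  have h2dδ : 2 * d < δ := by
    have hcm : c / (m : ℝ) < δ := by
      rw [div_lt_iff₀ hmR]
      have h1 := (div_lt_iff₀ hδ).mp hN
      have h2 : (N : ℝ) * δ ≤ (m : ℝ) * δ := mul_le_mul_of_nonneg_right hmN hδ.le
      linarith
    have : 2 * d = (2 / 3) * (c / (m : ℝ)) := by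
      rw [hddef]; field_simp
    rw [this]
    nlinarith [div_pos hc hmR]
  -- rewrite the approximating sum
  have happrox : (∑ j ∈ Finset.range m,
      ∫ y in (η1 + ((3 * j + s : ℕ) : ℝ) * (η2 - η1) / (3 * (m : ℝ)))..(
              η1 + ((3 * j + s + 1 : ℕ) : ℝ) * (η2 - η1) / (3 * (m : ℝ))), W (x - y))
      = ∑ j ∈ Finset.range m, ∫ y in f (3 * j + s)..f (3 * j + s + 1), W (x - y) := by
    refine Finset.sum_congr rfl fun j _ => ?_
    congr 1 <;> (simp only [hfdef, hddef]; push_cast; ring)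
  -- rewrite the limit
  have hsplit : (∫ y in η1..η2, W (x - y))
      = ∑ i ∈ Finset.range (3 * m), ∫ y in f i..f (i + 1), W (x - y) := by
    rw [intervalIntegral.sum_integral_adjacent_intervals (fun i _ => hint _ _)]
    have h0 : f 0 = η1 := by simp [hfdef]
    have h3m : f (3 * m) = η2 := by
      simp only [hfdef, hddef]
      push_cast
      field_simp
      ring
    rw [h0, h3m]
  have hlim : (1 / 3 : ℝ) * ∫ y in η1..η2, W (x - y)
      = ∑ j ∈ Finset.range m, ∑ k ∈ Finset.range 3,
          (1 / 3 : ℝ) * ∫ y in f (3 * j + k)..f (3 * j + k + 1), W (x - y) := by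
    rw [hsplit, sum_range_three_mul]
    simp [Finset.mul_sum]
  rw [Real.dist_eq, happrox, hlim]
  -- per-term estimate
  have hterm : ∀ j ∈ Finset.range m, ∀ k ∈ Finset.range 3,
      |(∫ y in f (3 * j + k)..f (3 * j + k + 1), W (x - y))
        - ∫ y in f (3 * j + s)..f (3 * j + s + 1), W (x - y)| ≤ ε' * d := by
    intro j _ k hk
    set t : ℝ := ((k : ℝ) - (s : ℝ)) * d with htdef
    have hks : |(k : ℝ) - (s : ℝ)| ≤ 2 := by
      have hk2 : (k : ℝ) ≤ 2 := by exact_mod_cast Nat.lt_succ_iff.mp (Finset.mem_range.mp hk)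
      have hs2 : (s : ℝ) ≤ 2 := by exact_mod_cast Nat.lt_succ_iff.mp hs
      rw [abs_sub_le_iff]
      have hk0 : (0:ℝ) ≤ (k:ℝ) := Nat.cast_nonneg k
      have hs0 : (0:ℝ) ≤ (s:ℝ) := Nat.cast_nonneg s
      constructor <;> linarith
    have ht2d : |t| ≤ 2 * d := by
      rw [htdef, abs_mul, abs_of_pos hd0]
      exact mul_le_mul_of_nonneg_right hks hd0.le
    have hshift : (∫ y in f (3 * j + k)..f (3 * j + k + 1), W (x - y))
        = ∫ y in f (3 * j + s)..f (3 * j + s + 1), W (x - y - t) := by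
      have heq := intervalIntegral.integral_comp_add_right
        (a := f (3 * j + s)) (b := f (3 * j + s + 1)) (fun y => W (x - y)) t
      simp only [sub_add_eq_sub_sub] at heq
      have e1 : f (3 * j + s) + t = f (3 * j + k) := by
        simp only [hfdef, htdef]; push_cast; ring
      have e2 : f (3 * j + s + 1) + t = f (3 * j + k + 1) := by
        simp only [hfdef, htdef]; push_cast; ring
      rw [e1, e2] at heq
      exact heq.symm
    have hint2 : IntervalIntegrable (fun y => W (x - y - t)) volume
        (f (3 * j + s)) (f (3 * j + s + 1)) := by
      apply Continuous.intervalIntegrable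
      exact hWc.comp ((continuous_const.sub continuous_id).sub continuous_const)
    rw [hshift, ← intervalIntegral.integral_sub hint2 (hint _ _)]
    have hlen : f (3 * j + s + 1) - f (3 * j + s) = d := by
      simp only [hfdef]; push_cast; ring
    have hbound : ∀ y ∈ Set.uIoc (f (3 * j + s)) (f (3 * j + s + 1)),
        ‖W (x - y - t) - W (x - y)‖ ≤ ε' := by
      intro y _
      have hdist : dist (x - y - t) (x - y) < δ := by
        rw [Real.dist_eq]
        have : x - y - t - (x - y) = -t := by ring
        rw [this, abs_neg]
        linarith
      have := hδ' hdist
      rw [Real.dist_eq] at this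
      exact le_of_lt (by simpa [Real.norm_eq_abs] using this)
    calc |∫ y in f (3 * j + s)..f (3 * j + s + 1), (W (x - y - t) - W (x - y))|
        ≤ ε' * |f (3 * j + s + 1) - f (3 * j + s)| := by
          simpa [Real.norm_eq_abs] using
            intervalIntegral.norm_integral_le_of_norm_le_const hbound
      _ = ε' * d := by rw [hlen, abs_of_pos hd0]
  -- final summation
  have hdiff : (∑ j ∈ Finset.range m, ∑ k ∈ Finset.range 3,
        (1 / 3 : ℝ) * ∫ y in f (3 * j + k)..f (3 * j + k + 1), W (x - y))
      - (∑ j ∈ Finset.range m, ∫ y in f (3 * j + s)..f (3 * j + s + 1), W (x - y))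
      = ∑ j ∈ Finset.range m, ∑ k ∈ Finset.range 3,
        (1 / 3 : ℝ) * ((∫ y in f (3 * j + k)..f (3 * j + k + 1), W (x - y))
          - ∫ y in f (3 * j + s)..f (3 * j + s + 1), W (x - y)) := by
    rw [← Finset.sum_sub_distrib]
    refine Finset.sum_congr rfl fun j _ => ?_
    simp [Finset.sum_range_succ]
    ring
  rw [hdiff]
  have hfinal : |∑ j ∈ Finset.range m, ∑ k ∈ Finset.range 3,
        (1 / 3 : ℝ) * ((∫ y in f (3 * j + k)..f (3 * j + k + 1), W (x - y))
          - ∫ y in f (3 * j + s)..f (3 * j + s + 1), W (x - y))| ≤ ε' * c / 3 := by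
    calc |∑ j ∈ Finset.range m, ∑ k ∈ Finset.range 3,
          (1 / 3 : ℝ) * ((∫ y in f (3 * j + k)..f (3 * j + k + 1), W (x - y))
            - ∫ y in f (3 * j + s)..f (3 * j + s + 1), W (x - y))|
        ≤ ∑ j ∈ Finset.range m, ∑ k ∈ Finset.range 3,
          |(1 / 3 : ℝ) * ((∫ y in f (3 * j + k)..f (3 * j + k + 1), W (x - y))
            - ∫ y in f (3 * j + s)..f (3 * j + s + 1), W (x - y))| := by
          refine le_trans (Finset.abs_sum_le_sum_abs _ _) ?_
          exact Finset.sum_le_sum fun j _ => Finset.abs_sum_le_sum_abs _ _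
      _ ≤ ∑ j ∈ Finset.range m, ∑ k ∈ Finset.range 3, (1 / 3 : ℝ) * (ε' * d) := by
          refine Finset.sum_le_sum fun j hj => Finset.sum_le_sum fun k hk => ?_
          rw [abs_mul]
          have : |(1/3 : ℝ)| = 1/3 := by norm_num
          rw [this]
          exact mul_le_mul_of_nonneg_left (hterm j hj k hk) (by norm_num)
      _ = (m : ℝ) * (ε' * d) := by
          simp [Finset.sum_const]
      _ = ε' * c / 3 := by
          rw [hddef]
          field_simp
  have : ε' * c / 3 < ε := by
    rw [hε'def]
    field_simp
    linarith
  linarith [abs_nonneg (0:ℝ), hfinal]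


/-- `I_{−1}^m(x) = Σ_{j=1}^{m} ∫_{A^m_{3j−2}} W(x − y) dy`, where
`A^m_i = [η1 + (i−1)(η2−η1)/(3m), η1 + i(η2−η1)/(3m))`. -/
noncomputable def Im1 (W : ℝ → ℝ) (η1 η2 : ℝ) (m : ℕ) (x : ℝ) : ℝ :=
  ∑ j ∈ Finset.range m,
    ∫ y in (η1 + (3 * (j : ℝ)) * (η2 - η1) / (3 * (m : ℝ)))..(
            η1 + (3 * (j : ℝ) + 1) * (η2 - η1) / (3 * (m : ℝ))), W (x - y)

/-- `I_0^m(x) = Σ_{j=1}^{m} ∫_{A^m_{3j−1}} W(x − y) dy`. -/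
noncomputable def I0m (W : ℝ → ℝ) (η1 η2 : ℝ) (m : ℕ) (x : ℝ) : ℝ :=
  ∑ j ∈ Finset.range m,
    ∫ y in (η1 + (3 * (j : ℝ) + 1) * (η2 - η1) / (3 * (m : ℝ)))..(
            η1 + (3 * (j : ℝ) + 2) * (η2 - η1) / (3 * (m : ℝ))), W (x - y)

/-- `I_1^m(x) = Σ_{j=1}^{m} ∫_{A^m_{3j}} W(x − y) dy`. -/
noncomputable def I1m (W : ℝ → ℝ) (η1 η2 : ℝ) (m : ℕ) (x : ℝ) : ℝ :=
  ∑ j ∈ Finset.range m,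
    ∫ y in (η1 + (3 * (j : ℝ) + 2) * (η2 - η1) / (3 * (m : ℝ)))..(
            η1 + (3 * (j : ℝ) + 3) * (η2 - η1) / (3 * (m : ℝ))), W (x - y)

/-- Each of `I_{−1}^m, I_0^m, I_1^m` converges uniformly in `x ∈ ℝ`, as `m → ∞`,
to `x ↦ (1/3) ∫_{η1}^{η2} W(x − y) dy`. -/
theorem strips_tendstoUniformly
    (L : ℝ) (hL : 0 < L) (W : ℝ → ℝ) (hWcont : Continuous W)
    (hWper : Function.Periodic W (2 * L))
    (η1 η2 : ℝ) (hη : η1 < η2) :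
    TendstoUniformly (fun m x => Im1 W η1 η2 m x)
        (fun x => (1 / 3) * ∫ y in η1..η2, W (x - y)) atTop ∧
    TendstoUniformly (fun m x => I0m W η1 η2 m x)
        (fun x => (1 / 3) * ∫ y in η1..η2, W (x - y)) atTop ∧
    TendstoUniformly (fun m x => I1m W η1 η2 m x)
        (fun x => (1 / 3) * ∫ y in η1..η2, W (x - y)) atTop := by
  have huc : UniformContinuous W :=
    periodic_uniformContinuous (by linarith) hWcont hWper
  refine ⟨?_, ?_, ?_⟩
  · have h := key_strip W hWcont huc η1 η2 hη 0 (by norm_num)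
    have he : (fun (m : ℕ) (x : ℝ) => Im1 W η1 η2 m x)
        = (fun (m : ℕ) (x : ℝ) => ∑ j ∈ Finset.range m,
          ∫ y in (η1 + ((3 * j + 0 : ℕ) : ℝ) * (η2 - η1) / (3 * (m : ℝ)))..(
                  η1 + ((3 * j + 0 + 1 : ℕ) : ℝ) * (η2 - η1) / (3 * (m : ℝ))), W (x - y)) := by
      funext m x
      refine Finset.sum_congr rfl fun j _ => ?_
      congr 1 <;> push_cast <;> ring
    rw [he]
    exact h
  · have h := key_strip W hWcont huc η1 η2 hη 1 (by norm_num)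
    have he : (fun (m : ℕ) (x : ℝ) => I0m W η1 η2 m x)
        = (fun (m : ℕ) (x : ℝ) => ∑ j ∈ Finset.range m,
          ∫ y in (η1 + ((3 * j + 1 : ℕ) : ℝ) * (η2 - η1) / (3 * (m : ℝ)))..(
                  η1 + ((3 * j + 1 + 1 : ℕ) : ℝ) * (η2 - η1) / (3 * (m : ℝ))), W (x - y)) := by
      funext m x
      refine Finset.sum_congr rfl fun j _ => ?_
      congr 1 <;> push_cast <;> ring
    rw [he]
    exact h
  · have h := key_strip W hWcont huc η1 η2 hη 2 (by norm_num)
    have he : (fun (m : ℕ) (x : ℝ) => I1m W η1 η2 m x)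
        = (fun (m : ℕ) (x : ℝ) => ∑ j ∈ Finset.range m,
          ∫ y in (η1 + ((3 * j + 2 : ℕ) : ℝ) * (η2 - η1) / (3 * (m : ℝ)))..(
                  η1 + ((3 * j + 2 + 1 : ℕ) : ℝ) * (η2 - η1) / (3 * (m : ℝ))), W (x - y)) := by
      funext m x
      refine Finset.sum_congr rfl fun j _ => ?_
      congr 1 <;> push_cast <;> ring
    rw [he]
    exact h
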